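/- Let R be F-finite of characteristic p, (M, κ) a Cartier module (κ : F_* M → M R-linear, M finitely generated), f ∈ R an M-regular element, and λ ≥ 0 rational. Let C_+ be generated by the maps κ^e f^{⌈λ(p^e−1)⌉} for e ≥ 1, and set σ(M, f^λ) = C_+^h M for h ≫ 0. Then for all sufficiently large a with λ(p^a − 1) ∈ ℤ one has σ(M, f^λ) = κ^a f^{λ(p^a−1)} M. -/

import Mathlib

open Function

variable {R : Type*} [CommRing R] {M : Type*} [AddCommGroup M] [Module R M]

/-- The submodule `κ^e (f^n • N)` (as a span, which coincides with the image for a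
`p^{-e}`-linear `κ`). -/
def opApply (κ : M →+ M) (f : R) (e n : ℕ) (N : Submodule R M) : Submodule R M :=
  Submodule.span R ((⇑κ)^[e] '' ((fun m => f ^ n • m) '' (N : Set M)))

/-- One application of the positive part of the Cartier algebra generated by the
`κ^e f^{⌈λ(p^e−1)⌉}`, `e ≥ 1`; iterating gives `C_+^h M`. -/
def cStep (p : ℕ) (κ : M →+ M) (f : R) (lam : ℚ) (N : Submodule R M) : Submodule R M :=
  ⨆ e : ℕ, ⨆ _ : 1 ≤ e, opApply κ f e (⌈lam * ((p : ℚ) ^ e - 1)⌉).toNat N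

section Aux

variable {p : ℕ} {κ : M →+ M} {f : R}

lemma kappa_iter_pow (hκ : ∀ (r : R) (m : M), κ (r ^ p • m) = r • κ m)
    (e : ℕ) (r : R) (m : M) : (⇑κ)^[e] (r ^ (p ^ e) • m) = r • (⇑κ)^[e] m := by
  induction e generalizing m with
  | zero => simp
  | succ e ih =>
    rw [Function.iterate_succ_apply, Function.iterate_succ_apply]
    have h1 : r ^ p ^ (e + 1) • m = (r ^ p ^ e) ^ p • m := by
      rw [← pow_mul, ← pow_succ]
    rw [h1, hκ, ih]

lemma mem_opApply (hκ : ∀ (r : R) (m : M), κ (r ^ p • m) = r • κ m)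
    (e n : ℕ) (N : Submodule R M) (x : M) :
    x ∈ opApply κ f e n N ↔ ∃ m ∈ N, (⇑κ)^[e] (f ^ n • m) = x := by
  have hset : (⇑κ)^[e] '' ((fun m => f ^ n • m) '' (N : Set M))
      = {x | ∃ m ∈ N, (⇑κ)^[e] (f ^ n • m) = x} := by
    rw [Set.image_image]; ext y; simp [SetLike.mem_coe]
  let P : Submodule R M :=
    { carrier := {x | ∃ m ∈ N, (⇑κ)^[e] (f ^ n • m) = x}
      zero_mem' := ⟨0, N.zero_mem, by simp⟩
      add_mem' := by
        rintro x y ⟨mx, hmx, rfl⟩ ⟨my, hmy, rfl⟩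
        exact ⟨mx + my, N.add_mem hmx hmy, by rw [smul_add, iterate_map_add]⟩
      smul_mem' := by
        rintro r x ⟨m, hm, rfl⟩
        refine ⟨r ^ p ^ e • m, N.smul_mem _ hm, ?_⟩
        rw [smul_comm, kappa_iter_pow hκ] }
  have : opApply κ f e n N = P := by
    rw [opApply, hset]
    exact Submodule.span_eq P
  rw [this]; rfl

lemma opApply_mono (hκ : ∀ (r : R) (m : M), κ (r ^ p • m) = r • κ m)
    (e n : ℕ) {N N' : Submodule R M} (h : N ≤ N') :
    opApply κ f e n N ≤ opApply κ f e n N' := by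
  intro x hx
  rw [mem_opApply hκ] at hx ⊢
  obtain ⟨m, hm, rfl⟩ := hx
  exact ⟨m, h hm, rfl⟩

lemma opApply_anti (hκ : ∀ (r : R) (m : M), κ (r ^ p • m) = r • κ m)
    (e : ℕ) {n n' : ℕ} (h : n ≤ n') (N : Submodule R M) :
    opApply κ f e n' N ≤ opApply κ f e n N := by
  intro x hx
  rw [mem_opApply hκ] at hx ⊢
  obtain ⟨m, hm, rfl⟩ := hx
  refine ⟨f ^ (n' - n) • m, N.smul_mem _ hm, ?_⟩
  rw [smul_smul, ← pow_add, Nat.add_sub_cancel' h]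

lemma opApply_comp (hκ : ∀ (r : R) (m : M), κ (r ^ p • m) = r • κ m)
    (e₁ n₁ e₂ n₂ : ℕ) (N : Submodule R M) :
    opApply κ f e₁ n₁ (opApply κ f e₂ n₂ N)
      = opApply κ f (e₁ + e₂) (n₁ * p ^ e₂ + n₂) N := by
  have key : ∀ m : M, (⇑κ)^[e₁] (f ^ n₁ • (⇑κ)^[e₂] (f ^ n₂ • m))
      = (⇑κ)^[e₁ + e₂] (f ^ (n₁ * p ^ e₂ + n₂) • m) := by
    intro m
    rw [← kappa_iter_pow hκ e₂ (f ^ n₁), ← Function.iterate_add_apply,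
      ← pow_mul, smul_smul, ← pow_add]
  ext x
  rw [mem_opApply hκ, mem_opApply hκ]
  constructor
  · rintro ⟨y, hy, rfl⟩
    rw [mem_opApply hκ] at hy
    obtain ⟨m, hm, rfl⟩ := hy
    exact ⟨m, hm, (key m).symm⟩
  · rintro ⟨m, hm, rfl⟩
    refine ⟨(⇑κ)^[e₂] (f ^ n₂ • m), ?_, key m⟩
    rw [mem_opApply hκ]
    exact ⟨m, hm, rfl⟩

lemma opApply_iSup_le (hκ : ∀ (r : R) (m : M), κ (r ^ p • m) = r • κ m)
    (e n : ℕ) {ι : Sort*} (N : ι → Submodule R M) :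
    opApply κ f e n (⨆ i, N i) ≤ ⨆ i, opApply κ f e n (N i) := by
  intro x hx
  rw [mem_opApply hκ] at hx
  obtain ⟨m, hm, rfl⟩ := hx
  refine Submodule.iSup_induction (motive := fun m => (⇑κ)^[e] (f ^ n • m) ∈
    ⨆ i, opApply κ f e n (N i)) N hm ?_ ?_ ?_
  · intro i y hy
    exact Submodule.mem_iSup_of_mem i ((mem_opApply hκ e n (N i) _).2 ⟨y, hy, rfl⟩)
  · simp
  · intro x y hx hy
    rw [smul_add, iterate_map_add]
    exact add_mem hx hy

end Aux

theorem sigma_simple_description (p : ℕ) (hp : p.Prime) [CharP R p]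
    (κ : M →+ M) (hκ : ∀ (r : R) (m : M), κ (r ^ p • m) = r • κ m)
    (f : R) (hf : ∀ m : M, f • m = 0 → m = 0)
    (lam : ℚ) (hlam : 0 ≤ lam)
    (σ : Submodule R M) (h₀ : ℕ)
    (hσ : ∀ h : ℕ, h₀ ≤ h → (cStep p κ f lam)^[h] (⊤ : Submodule R M) = σ) :
    ∃ a₀ : ℕ, ∀ a : ℕ, a₀ ≤ a → (∃ k : ℤ, lam * ((p : ℚ) ^ a - 1) = k) →
      σ = opApply κ f a (⌈lam * ((p : ℚ) ^ a - 1)⌉).toNat (⊤ : Submodule R M) := by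
  classical
  have hq0 : (1 : ℚ) ≤ (p : ℚ) := by exact_mod_cast hp.one_lt.le
  have hq1 : ∀ e : ℕ, (1 : ℚ) ≤ (p : ℚ) ^ e := fun e => one_le_pow₀ hq0
  have hval_nonneg : ∀ e : ℕ, 0 ≤ lam * ((p : ℚ) ^ e - 1) := fun e =>
    mul_nonneg hlam (sub_nonneg.2 (hq1 e))
  set nn : ℕ → ℕ := fun e => (⌈lam * ((p : ℚ) ^ e - 1)⌉).toNat with hnn
  have hnn_cast : ∀ e : ℕ, ((nn e : ℕ) : ℤ) = ⌈lam * ((p : ℚ) ^ e - 1)⌉ := fun e =>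
    Int.toNat_of_nonneg (Int.ceil_nonneg (hval_nonneg e))
  have hnn_ge : ∀ e : ℕ, lam * ((p : ℚ) ^ e - 1) ≤ (nn e : ℚ) := by
    intro e
    have := Int.le_ceil (lam * ((p : ℚ) ^ e - 1))
    rw [← hnn_cast e] at this
    exact_mod_cast this
  have hnn_int : ∀ a : ℕ, (∃ k : ℤ, lam * ((p : ℚ) ^ a - 1) = k) →
      ((nn a : ℕ) : ℚ) = lam * ((p : ℚ) ^ a - 1) := by
    rintro a ⟨k, hk⟩
    have : ⌈lam * ((p : ℚ) ^ a - 1)⌉ = k := by rw [hk]; exact Int.ceil_intCast k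
    have h2 : ((nn a : ℕ) : ℤ) = k := by rw [hnn_cast a, this]
    rw [hk]; exact_mod_cast h2
  -- key additive decomposition of values
  have hsplit : ∀ s t : ℕ, lam * ((p : ℚ) ^ (s + t) - 1)
      = lam * ((p : ℚ) ^ s - 1) * (p : ℚ) ^ t + lam * ((p : ℚ) ^ t - 1) := by
    intro s t; rw [pow_add]; ring
  -- subadditivity of nn
  have hnn_subadd : ∀ s t : ℕ, nn (s + t) ≤ nn s * p ^ t + nn t := by
    intro s t
    have h1 : lam * ((p : ℚ) ^ (s + t) - 1) ≤ ((nn s * p ^ t + nn t : ℕ) : ℚ) := by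
      push_cast
      rw [hsplit s t]
      have : lam * ((p : ℚ) ^ s - 1) * (p : ℚ) ^ t ≤ (nn s : ℚ) * (p : ℚ) ^ t :=
        mul_le_mul_of_nonneg_right (hnn_ge s) (by positivity)
      exact add_le_add this (hnn_ge t)
    have h2 : ⌈lam * ((p : ℚ) ^ (s + t) - 1)⌉ ≤ ((nn s * p ^ t + nn t : ℕ) : ℤ) := by
      apply Int.ceil_le.2
      exact_mod_cast h1
    have := hnn_cast (s + t) ▸ h2
    exact_mod_cast this
  -- exact additivity in the integral case
  have hnn_add_exact : ∀ s t : ℕ, (∃ k : ℤ, lam * ((p : ℚ) ^ s - 1) = k) →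
      (∃ k : ℤ, lam * ((p : ℚ) ^ t - 1) = k) → nn (s + t) = nn s * p ^ t + nn t := by
    intro s t hs ht
    have hs' := hnn_int s hs
    have ht' := hnn_int t ht
    have hst : ∃ k : ℤ, lam * ((p : ℚ) ^ (s + t) - 1) = k := by
      obtain ⟨ks, hks⟩ := hs; obtain ⟨kt, hkt⟩ := ht
      exact ⟨ks * (p : ℤ) ^ t + kt, by rw [hsplit s t, hks, hkt]; push_cast; ring⟩
    have : ((nn (s + t) : ℕ) : ℚ) = ((nn s * p ^ t + nn t : ℕ) : ℚ) := by
      rw [hnn_int _ hst, hsplit s t, ← hs', ← ht']; push_cast; ring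
    exact_mod_cast this
  -- integrality closed under addition and subtraction
  have hint_add : ∀ s t : ℕ, (∃ k : ℤ, lam * ((p : ℚ) ^ s - 1) = k) →
      (∃ k : ℤ, lam * ((p : ℚ) ^ t - 1) = k) → (∃ k : ℤ, lam * ((p : ℚ) ^ (s + t) - 1) = k) := by
    rintro s t ⟨ks, hks⟩ ⟨kt, hkt⟩
    exact ⟨ks * (p : ℤ) ^ t + kt, by rw [hsplit s t, hks, hkt]; push_cast; ring⟩
  have hint_sub : ∀ s t : ℕ, (∃ k : ℤ, lam * ((p : ℚ) ^ t - 1) = k) →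
      (∃ k : ℤ, lam * ((p : ℚ) ^ (s + t) - 1) = k) → (∃ k : ℤ, lam * ((p : ℚ) ^ s - 1) = k) := by
    rintro s t ⟨kt, hkt⟩ ⟨kst, hkst⟩
    refine ⟨kst - kt * (p : ℤ) ^ s, ?_⟩
    have : lam * ((p : ℚ) ^ s - 1) = lam * ((p : ℚ) ^ (s + t) - 1) - lam * ((p : ℚ) ^ t - 1) * (p : ℚ) ^ s := by
      rw [pow_add]; ring
    rw [this, hkst, hkt]; push_cast; ring
  -- basic order facts for cStep
  have le_cStep : ∀ e : ℕ, 1 ≤ e → ∀ N : Submodule R M,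
      opApply κ f e (nn e) N ≤ cStep p κ f lam N := by
    intro e he N
    exact le_iSup₂_of_le e he le_rfl
  have cStep_mono : ∀ {N N' : Submodule R M}, N ≤ N' →
      cStep p κ f lam N ≤ cStep p κ f lam N' := by
    intro N N' h
    exact iSup_mono fun e => iSup_mono fun _ => opApply_mono hκ _ _ h
  -- Part A ingredient 1: cStep^[h] ⊤ ≤ ⨆_{e ≥ h} opApply e (nn e) ⊤
  have partA1 : ∀ h : ℕ, (cStep p κ f lam)^[h] (⊤ : Submodule R M)
      ≤ ⨆ e : ℕ, ⨆ _ : h ≤ e, opApply κ f e (nn e) (⊤ : Submodule R M) := by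
    intro h
    induction h with
    | zero =>
      refine le_trans ?_ (le_iSup₂_of_le 0 le_rfl le_rfl)
      intro x _
      rw [mem_opApply hκ]
      refine ⟨x, trivial, ?_⟩
      have : nn 0 = 0 := by simp [hnn]
      simp [this]
    | succ h ih =>
      rw [Function.iterate_succ_apply']
      refine le_trans (cStep_mono ih) ?_
      refine iSup₂_le fun e₁ he₁ => ?_
      refine le_trans (opApply_iSup_le hκ _ _ _) (iSup_le fun e => ?_)
      refine le_trans (opApply_iSup_le hκ _ _ _) (iSup_le fun he => ?_)
      rw [opApply_comp hκ]
      refine le_trans (opApply_anti hκ _ (hnn_subadd e₁ e) _) ?_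
      exact le_iSup₂_of_le (e₁ + e) (by omega) le_rfl
  -- Part A ingredient 2: absorption for e ≥ a in the integral case
  have partA2 : ∀ a e : ℕ, a ≤ e → (∃ k : ℤ, lam * ((p : ℚ) ^ a - 1) = k) →
      opApply κ f e (nn e) (⊤ : Submodule R M)
        ≤ opApply κ f a (nn a) (⊤ : Submodule R M) := by
    intro a e hae hint
    have h1 : nn a * p ^ (e - a) ≤ nn e := by
      have hr : ((nn a * p ^ (e - a) : ℕ) : ℚ) ≤ ((nn e : ℕ) : ℚ) := by
        push_cast
        rw [hnn_int a hint]
        refine le_trans ?_ (hnn_ge e)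
        have : lam * ((p : ℚ) ^ a - 1) * (p : ℚ) ^ (e - a) = lam * ((p : ℚ) ^ e - (p : ℚ) ^ (e - a)) := by
          have hpow : (p : ℚ) ^ a * (p : ℚ) ^ (e - a) = (p : ℚ) ^ e := by
            rw [← pow_add, Nat.add_sub_cancel' hae]
          rw [← hpow]; ring
        rw [this]
        apply mul_le_mul_of_nonneg_left _ hlam
        have : (1 : ℚ) ≤ (p : ℚ) ^ (e - a) := hq1 _
        linarith
      exact_mod_cast hr
    refine le_trans (opApply_anti hκ _ h1 _) ?_
    have : opApply κ f e (nn a * p ^ (e - a)) (⊤ : Submodule R M)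
        = opApply κ f a (nn a) (opApply κ f (e - a) 0 (⊤ : Submodule R M)) := by
      rw [opApply_comp hκ, Nat.add_sub_cancel' hae, Nat.add_zero]
    rw [this]
    exact opApply_mono hκ _ _ le_top
  by_cases hc : ∃ c, 1 ≤ c ∧ ∃ k : ℤ, lam * ((p : ℚ) ^ c - 1) = k
  · obtain ⟨c, hc1, hkc⟩ := hc
    refine ⟨h₀ * c + 1, fun a ha hka => ?_⟩
    have ha1 : 1 ≤ a := le_trans (by omega) ha
    -- integrality of a - j*c for j ≤ h₀
    have hint_res : ∀ j : ℕ, j ≤ h₀ → ∃ k : ℤ, lam * ((p : ℚ) ^ (a - j * c) - 1) = k := by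
      intro j hj
      induction j with
      | zero => simpa using hka
      | succ j ihj =>
        have hjc : (j + 1) * c ≤ a := by
          calc (j + 1) * c ≤ h₀ * c := Nat.mul_le_mul_right c (by omega)
          _ ≤ a := by omega
        have heq : a - j * c = (a - (j + 1) * c) + c := by
          have hmul : (j + 1) * c = j * c + c := Nat.succ_mul j c
          omega
        have := ihj (by omega)
        rw [heq] at this
        exact hint_sub _ _ hkc this
    -- Part B : opApply a (nn a) ⊤ ≤ σ
    have partB : opApply κ f a (nn a) (⊤ : Submodule R M) ≤ σ := by
      set r : ℕ := a - h₀ * c with hr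
      have hr1 : 1 ≤ r := by omega
      have key : ∀ j : ℕ, j ≤ h₀ →
          opApply κ f (j * c + r) (nn (j * c + r)) (⊤ : Submodule R M)
            ≤ (cStep p κ f lam)^[j + 1] (⊤ : Submodule R M) := by
        intro j hj
        induction j with
        | zero =>
          simpa using le_cStep r hr1 ⊤
        | succ j ihj =>
          have hintjr : ∃ k : ℤ, lam * ((p : ℚ) ^ (j * c + r) - 1) = k := by
            have := hint_res (h₀ - j) (by omega)
            have heq : a - (h₀ - j) * c = j * c + r := by
              have h2 : (h₀ - j) * c = h₀ * c - j * c := Nat.sub_mul h₀ j c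
              have h3 : j * c ≤ h₀ * c := Nat.mul_le_mul_right c (by omega)
              have hr' : r = a - h₀ * c := hr
              omega
            rwa [heq] at this
          have heq : (j + 1) * c + r = c + (j * c + r) := by ring
          rw [heq, hnn_add_exact c (j * c + r) hkc hintjr, ← opApply_comp hκ]
          refine le_trans (opApply_mono hκ _ _ (ihj (by omega))) ?_
          exact (le_cStep c hc1 _).trans (Function.iterate_succ_apply' _ _ _).symm.le
      have hfin : h₀ * c + r = a := by omega
      have := key h₀ le_rfl
      rw [Nat.mul_comm h₀ c] at hfin
      rw [Nat.mul_comm h₀ c, hfin] at this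
      exact le_trans this (le_of_eq (hσ (h₀ + 1) (by omega)))
    -- Part A : σ ≤ opApply a (nn a) ⊤
    have partA : σ ≤ opApply κ f a (nn a) (⊤ : Submodule R M) := by
      rw [← hσ (max h₀ a) (le_max_left _ _)]
      refine le_trans (partA1 (max h₀ a)) ?_
      refine iSup₂_le fun e he => ?_
      exact partA2 a e (le_trans (le_max_right _ _) he) hka
    exact le_antisymm partA partB
  · refine ⟨1, fun a ha hint => absurd ⟨a, ha, hint⟩ hc⟩
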